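/- Let ℓ ∈ ℕ, let f : ℝ → ℝ be of class C^{ℓ+1}, and let ξ be a centered real random variable with finite moments up to order ℓ+2. Then there exists a constant C_ℓ (depending only on ℓ) such that |E[ξ f(ξ)] − Σ_{k=1}^{ℓ} (κ_{k+1}(ξ)/k!) E[f^{(k)}(ξ)]| ≤ C_ℓ · E[|ξ|^{ℓ+2}] · sup_{t ∈ ℝ} |f^{(ℓ+1)}(t)|, where κ_k(ξ) denotes the k-th cumulant of ξ. -/

import Mathlib

open MeasureTheory

/-- The cumulants determined recursively from the moment sequence `m` via
`κ_n = m_n - ∑_{k=1}^{n-1} C(n-1, k-1) κ_k m_{n-k}`. -/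
noncomputable def cumulantOfMoments (m : ℕ → ℝ) : ℕ → ℝ
  | n =>
    m n - ∑ k ∈ (Finset.range (n - 1)).attach,
      (Nat.choose (n - 1) k.val : ℝ) * cumulantOfMoments m (k.val + 1) * m (n - 1 - k.val)
  decreasing_by
    have := k.2
    simp only [Finset.mem_range] at this
    omega

open Finset Set


private lemma itDW_eq {g : ℝ → ℝ} {m : ℕ} (hg : ContDiff ℝ (m : ℕ∞) g) {s : Set ℝ}
    (hs : UniqueDiffOn ℝ s) {k : ℕ} (hk : k ≤ m) :
    ∀ x ∈ s, iteratedDerivWithin k g s x = iteratedDeriv k g x := by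
  induction k with
  | zero => intro x hx; simp
  | succ k ih =>
    intro x hx
    rw [iteratedDerivWithin_succ, iteratedDeriv_succ]
    rw [derivWithin_congr (fun y hy => ih (by omega) y hy) (ih (by omega) x hx)]
    refine DifferentiableAt.derivWithin ?_ (hs x hx)
    have : (k : WithTop ℕ∞) < (m : ℕ∞) := by exact_mod_cast (by omega : k < m)
    exact (hg.differentiable_iteratedDeriv k this) x

private lemma taylor_bound_nonneg {n : ℕ} {g : ℝ → ℝ} (hg : ContDiff ℝ ((n : ℕ∞) + 1) g) {M : ℝ}
    (hM : ∀ t, |iteratedDeriv (n + 1) g t| ≤ M) {x : ℝ} (hx : 0 ≤ x) :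
    |g x - ∑ i ∈ Finset.range (n + 1), iteratedDeriv i g 0 / (i.factorial : ℝ) * x ^ i|
      ≤ M * |x| ^ (n + 1) / (n.factorial : ℝ) := by
  have hM0 : 0 ≤ M := le_trans (abs_nonneg _) (hM 0)
  rcases eq_or_lt_of_le hx with rfl | hx'
  · simp [Finset.sum_range_succ']
  have hs : UniqueDiffOn ℝ (Set.Icc 0 x) := uniqueDiffOn_Icc hx'
  have hitd : ∀ i, i ≤ n + 1 → ∀ y ∈ Set.Icc 0 x,
      iteratedDerivWithin i g (Set.Icc 0 x) y = iteratedDeriv i g y := by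
    intro i hi y hy
    exact itDW_eq (m := n + 1) (by exact_mod_cast hg) hs hi y hy
  have key := taylor_mean_remainder_bound (f := g) (a := 0) (b := x) (C := M) (n := n)
    hx (hg.contDiffOn.of_le (by norm_cast)) (Set.right_mem_Icc.2 hx)
    (fun y hy => by rw [Real.norm_eq_abs, hitd (n+1) le_rfl y hy]; exact hM y)
  rw [taylor_within_apply] at key
  have : ∑ i ∈ Finset.range (n + 1), iteratedDeriv i g 0 / (i.factorial : ℝ) * x ^ i
      = ∑ i ∈ Finset.range (n + 1),
        (((i.factorial : ℝ))⁻¹ * (x - 0) ^ i) • iteratedDerivWithin i g (Set.Icc 0 x) 0 := by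
    refine Finset.sum_congr rfl fun i hi => ?_
    rw [hitd i (by have := Finset.mem_range.1 hi; omega) 0
      (Set.left_mem_Icc.2 hx)]
    simp [smul_eq_mul]; ring
  rw [this]
  calc |g x - _| = ‖g x - _‖ := (Real.norm_eq_abs _).symm
    _ ≤ M * (x - 0) ^ (n + 1) / (n.factorial : ℝ) := key
    _ = M * |x| ^ (n + 1) / (n.factorial : ℝ) := by rw [sub_zero, abs_of_nonneg hx]

private lemma taylor_bound {n : ℕ} {g : ℝ → ℝ} (hg : ContDiff ℝ ((n : ℕ∞) + 1) g) {M : ℝ}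
    (hM : ∀ t, |iteratedDeriv (n + 1) g t| ≤ M) (x : ℝ) :
    |g x - ∑ i ∈ Finset.range (n + 1), iteratedDeriv i g 0 / (i.factorial : ℝ) * x ^ i|
      ≤ M * |x| ^ (n + 1) / (n.factorial : ℝ) := by
  rcases le_or_gt 0 x with hx | hx
  · exact taylor_bound_nonneg hg hM hx
  · set g' : ℝ → ℝ := fun y => g (-y) with hg'def
    have hg' : ContDiff ℝ ((n : ℕ∞) + 1) g' := hg.comp contDiff_neg
    have hitd : ∀ (i : ℕ) (a : ℝ), iteratedDeriv i g' a = (-1) ^ i * iteratedDeriv i g (-a) := by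
      intro i a
      have := iteratedDeriv_comp_neg i g a
      simpa [smul_eq_mul] using this
    have hM' : ∀ t, |iteratedDeriv (n + 1) g' t| ≤ M := by
      intro t
      rw [hitd]
      rw [abs_mul, abs_pow, abs_neg, abs_one, one_pow, one_mul]
      exact hM _
    have key := taylor_bound_nonneg hg' hM' (x := -x) (by linarith)
    have h1 : g' (-x) = g x := by simp [hg'def]
    have h2 : ∀ i, iteratedDeriv i g' 0 / (i.factorial : ℝ) * (-x) ^ i
        = iteratedDeriv i g 0 / (i.factorial : ℝ) * x ^ i := by
      intro i
      rw [hitd, neg_zero, neg_pow x]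
      have h4 : ((-1:ℝ))^i * ((-1:ℝ))^i = 1 := by
        rw [← pow_add, ← two_mul, pow_mul]; norm_num
      calc (-1:ℝ) ^ i * iteratedDeriv i g 0 / (i.factorial : ℝ) * ((-1) ^ i * x ^ i)
          = ((-1:ℝ)^i * (-1)^i) * (iteratedDeriv i g 0 / (i.factorial : ℝ) * x ^ i) := by ring
        _ = iteratedDeriv i g 0 / (i.factorial : ℝ) * x ^ i := by rw [h4, one_mul]
    rw [h1, Finset.sum_congr rfl (fun i _ => h2 i), abs_neg] at key
    exact key

private lemma itd_itd (i : ℕ) : ∀ (k : ℕ) (f : ℝ → ℝ),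
    iteratedDeriv i (iteratedDeriv k f) = iteratedDeriv (k + i) f := by
  intro k
  induction k with
  | zero => intro f; simp
  | succ k ih =>
    intro f
    rw [iteratedDeriv_succ' (n := k) (f := f), ih (deriv f),
      show k + 1 + i = k + i + 1 by omega, iteratedDeriv_succ']

private lemma contDiff_itd {f : ℝ → ℝ} {L : ℕ} (hf : ContDiff ℝ (L : ℕ∞) f) {k m : ℕ}
    (hkm : k + m ≤ L) : ContDiff ℝ (m : ℕ∞) (iteratedDeriv k f) := by
  rw [contDiff_iff_iteratedDeriv]
  constructor
  · intro j hj
    rw [itd_itd]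
    refine hf.continuous_iteratedDeriv (k + j) ?_
    have hj' : j ≤ m := by exact_mod_cast hj
    exact_mod_cast (by omega : k + j ≤ L)
  · intro j hj
    rw [itd_itd]
    refine hf.differentiable_iteratedDeriv (k + j) ?_
    have hj' : j < m := by exact_mod_cast hj
    exact_mod_cast (by omega : k + j < L)

private lemma momentConv {Ω : Type} [MeasurableSpace Ω] {μ : Measure Ω}
    {ξ : Ω → ℝ} (hmeas : Measurable ξ) (q : ℕ) :
    ∫ ω, |ξ ω| ^ q ∂μ = (∫⁻ ω, (‖ξ ω‖₊ : ENNReal) ^ q ∂μ).toReal := by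
  rw [integral_eq_lintegral_of_nonneg_ae (ae_of_all _ fun ω => pow_nonneg (abs_nonneg _) q)
    ((hmeas.abs.pow_const q).aestronglyMeasurable)]
  congr 1
  refine lintegral_congr fun ω => ?_
  rw [ENNReal.ofReal_pow (abs_nonneg _), ← Real.enorm_eq_ofReal_abs, enorm_eq_nnnorm]

private lemma momentFin {Ω : Type} [MeasurableSpace Ω] {μ : Measure Ω}
    {ξ : Ω → ℝ} {q : ℕ} (h : Integrable (fun ω => |ξ ω| ^ q) μ) :
    (∫⁻ ω, (‖ξ ω‖₊ : ENNReal) ^ q ∂μ) ≠ ⊤ := by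
  have := h.hasFiniteIntegral
  simp only [HasFiniteIntegral] at this
  refine ne_of_lt (lt_of_le_of_lt (le_of_eq (lintegral_congr fun ω => ?_)) this)
  rw [enorm_eq_nnnorm, nnnorm_pow, Real.nnnorm_abs, ENNReal.coe_pow]

private lemma momentProd {Ω : Type} [MeasurableSpace Ω] {μ : Measure Ω} [IsProbabilityMeasure μ]
    {ξ : Ω → ℝ} (hmeas : Measurable ξ) (a b : ℕ)
    (hiab : Integrable (fun ω => |ξ ω| ^ (a + b)) μ) :
    (∫ ω, |ξ ω| ^ a ∂μ) * (∫ ω, |ξ ω| ^ b ∂μ) ≤ ∫ ω, |ξ ω| ^ (a + b) ∂μ := by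
  rcases Nat.eq_zero_or_pos a with rfl | ha
  · simp [measure_univ]
  rcases Nat.eq_zero_or_pos b with rfl | hb
  · simp [measure_univ]
  set N : ℕ → ENNReal := fun q => ∫⁻ ω, (‖ξ ω‖₊ : ENNReal) ^ q ∂μ with hN
  have hNr : ∀ q : ℕ, 0 < q → N q = eLpNorm' ξ (q : ℝ) μ ^ q := by
    intro q hq
    have h1 := lintegral_rpow_enorm_eq_rpow_eLpNorm' (μ := μ) (f := ξ) (q := (q : ℝ))
      (by exact_mod_cast hq)
    rw [← ENNReal.rpow_natCast (eLpNorm' ξ (q:ℝ) μ) q, ← h1, hN]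
    exact lintegral_congr fun ω => (ENNReal.rpow_natCast _ q).symm
  have hmono : ∀ p q : ℕ, 0 < p → p ≤ q → eLpNorm' ξ (p : ℝ) μ ≤ eLpNorm' ξ (q : ℝ) μ := by
    intro p q hp hpq
    exact eLpNorm'_le_eLpNorm'_of_exponent_le (by exact_mod_cast hp) (by exact_mod_cast hpq) μ
      hmeas.aestronglyMeasurable
  have key : N a * N b ≤ N (a + b) := by
    rw [hNr a ha, hNr b hb, hNr (a + b) (by omega)]
    calc eLpNorm' ξ (a : ℝ) μ ^ a * eLpNorm' ξ (b : ℝ) μ ^ b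
        ≤ eLpNorm' ξ ((a + b : ℕ) : ℝ) μ ^ a * eLpNorm' ξ ((a + b : ℕ) : ℝ) μ ^ b := by
          gcongr
          · exact hmono a (a+b) ha (by omega)
          · exact hmono b (a+b) hb (by omega)
      _ = eLpNorm' ξ ((a + b : ℕ) : ℝ) μ ^ (a + b) := by rw [pow_add]
  rw [momentConv hmeas, momentConv hmeas, momentConv hmeas, ← ENNReal.toReal_mul]
  exact ENNReal.toReal_mono (momentFin hiab) key

noncomputable def cumBound : ℕ → ℝ
  | n =>
    1 + ∑ k ∈ (Finset.range (n - 1)).attach,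
      (Nat.choose (n - 1) k.val : ℝ) * cumBound (k.val + 1)
  decreasing_by
    have := k.2
    simp only [Finset.mem_range] at this
    omega

private lemma cumulantOfMoments_eq (m : ℕ → ℝ) (n : ℕ) : cumulantOfMoments m n =
    m n - ∑ k ∈ Finset.range (n - 1),
      (Nat.choose (n - 1) k : ℝ) * cumulantOfMoments m (k + 1) * m (n - 1 - k) := by
  rw [cumulantOfMoments]
  rw [Finset.sum_attach (Finset.range (n-1))
    (fun k => (Nat.choose (n - 1) k : ℝ) * cumulantOfMoments m (k + 1) * m (n - 1 - k))]

private lemma cumBound_eq (n : ℕ) : cumBound n =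
    1 + ∑ k ∈ Finset.range (n - 1), (Nat.choose (n - 1) k : ℝ) * cumBound (k + 1) := by
  rw [cumBound]
  rw [Finset.sum_attach (Finset.range (n-1))
    (fun k => (Nat.choose (n - 1) k : ℝ) * cumBound (k + 1))]

private lemma cumBound_ge_one (n : ℕ) : 1 ≤ cumBound n := by
  induction n using Nat.strong_induction_on with
  | _ n ih =>
    rw [cumBound_eq]
    have : 0 ≤ ∑ k ∈ Finset.range (n - 1), (Nat.choose (n - 1) k : ℝ) * cumBound (k + 1) := by
      refine Finset.sum_nonneg fun k hk => ?_
      have hk' := Finset.mem_range.1 hk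
      have := ih (k + 1) (by omega)
      positivity
    linarith

section
variable {Ω : Type} [MeasurableSpace Ω] {μ : Measure Ω} [IsProbabilityMeasure μ]
  {ξ : Ω → ℝ} (hmeas : Measurable ξ) {L : ℕ}
  (hint : ∀ k ≤ L, Integrable (fun ω => |ξ ω| ^ k) μ)

private lemma absMoment_nonneg (j : ℕ) : 0 ≤ ∫ ω, |ξ ω| ^ j ∂μ :=
  integral_nonneg fun ω => pow_nonneg (abs_nonneg _) j

private lemma moment_abs_le (j : ℕ) :
    |∫ ω, ξ ω ^ j ∂μ| ≤ ∫ ω, |ξ ω| ^ j ∂μ := by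
  calc |∫ ω, ξ ω ^ j ∂μ| ≤ ∫ ω, |ξ ω ^ j| ∂μ := by
        rw [← Real.norm_eq_abs]
        exact (norm_integral_le_integral_norm _).trans (le_of_eq (by simp [Real.norm_eq_abs]))
    _ = ∫ ω, |ξ ω| ^ j ∂μ := by simp [abs_pow]

include hmeas hint in
private lemma cumBound_spec :
    ∀ n, 1 ≤ n → ∀ s, n + s ≤ L →
      |cumulantOfMoments (fun j => ∫ ω, ξ ω ^ j ∂μ) n| * (∫ ω, |ξ ω| ^ s ∂μ)
        ≤ cumBound n * (∫ ω, |ξ ω| ^ (n + s) ∂μ) := by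
  set m : ℕ → ℝ := fun j => ∫ ω, ξ ω ^ j ∂μ with hm
  set μa : ℕ → ℝ := fun j => ∫ ω, |ξ ω| ^ j ∂μ with hμa
  set κ : ℕ → ℝ := cumulantOfMoments m with hκ
  intro n
  induction n using Nat.strong_induction_on with
  | _ n ih =>
    intro hn s hs
    have hμan : ∀ j, 0 ≤ μa j := fun j => absMoment_nonneg j
    have habs : ∀ j, |m j| ≤ μa j := fun j => moment_abs_le j
    have h1 : |κ n| ≤ |m n| + ∑ k ∈ Finset.range (n - 1),
        (Nat.choose (n - 1) k : ℝ) * |κ (k + 1)| * |m (n - 1 - k)| := by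
      rw [hκ, cumulantOfMoments_eq]
      refine (abs_sub _ _).trans ?_
      gcongr
      refine (Finset.abs_sum_le_sum_abs _ _).trans ?_
      refine Finset.sum_le_sum fun k hk => ?_
      rw [abs_mul, abs_mul, abs_of_nonneg (by positivity : (0:ℝ) ≤ (Nat.choose (n-1) k : ℝ))]
    have h2 : |κ n| * μa s ≤ (|m n| + ∑ k ∈ Finset.range (n - 1),
        (Nat.choose (n - 1) k : ℝ) * |κ (k + 1)| * |m (n - 1 - k)|) * μa s :=
      mul_le_mul_of_nonneg_right h1 (hμan s)
    have h3 : ∀ k ∈ Finset.range (n - 1),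
        ((Nat.choose (n - 1) k : ℝ) * |κ (k + 1)| * |m (n - 1 - k)|) * μa s
          ≤ (Nat.choose (n - 1) k : ℝ) * cumBound (k + 1) * μa (n + s) := by
      intro k hk
      have hk' := Finset.mem_range.1 hk
      have e1 : μa (n - 1 - k) * μa s ≤ μa (n - 1 - k + s) := by
        have := momentProd hmeas (n - 1 - k) s (hint _ (by omega))
        simpa using this
      have e2 : |κ (k + 1)| * μa (n - 1 - k + s) ≤ cumBound (k + 1) * μa (n + s) := by
        have h := ih (k + 1) (by omega) (by omega) (n - 1 - k + s) (by omega)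
        rwa [show k + 1 + (n - 1 - k + s) = n + s by omega] at h
      calc ((Nat.choose (n - 1) k : ℝ) * |κ (k + 1)| * |m (n - 1 - k)|) * μa s
          = (Nat.choose (n - 1) k : ℝ) * (|κ (k + 1)| * (|m (n - 1 - k)| * μa s)) := by ring
        _ ≤ (Nat.choose (n - 1) k : ℝ) * (|κ (k + 1)| * (μa (n - 1 - k) * μa s)) := by
            have : |m (n - 1 - k)| * μa s ≤ μa (n - 1 - k) * μa s :=
              mul_le_mul_of_nonneg_right (habs _) (hμan s)
            have h' : |κ (k + 1)| * (|m (n - 1 - k)| * μa s)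
                ≤ |κ (k + 1)| * (μa (n - 1 - k) * μa s) :=
              mul_le_mul_of_nonneg_left this (abs_nonneg _)
            exact mul_le_mul_of_nonneg_left h' (by positivity)
        _ ≤ (Nat.choose (n - 1) k : ℝ) * (|κ (k + 1)| * μa (n - 1 - k + s)) := by
            exact mul_le_mul_of_nonneg_left
              (mul_le_mul_of_nonneg_left e1 (abs_nonneg _)) (by positivity)
        _ ≤ (Nat.choose (n - 1) k : ℝ) * (cumBound (k + 1) * μa (n + s)) :=
            mul_le_mul_of_nonneg_left e2 (by positivity)
        _ = (Nat.choose (n - 1) k : ℝ) * cumBound (k + 1) * μa (n + s) := by ring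
    have e0 : μa n * μa s ≤ μa (n + s) := by
      have := momentProd hmeas n s (hint _ (by omega))
      simpa using this
    calc |κ n| * μa s ≤ (|m n| + ∑ k ∈ Finset.range (n - 1),
          (Nat.choose (n - 1) k : ℝ) * |κ (k + 1)| * |m (n - 1 - k)|) * μa s := h2
      _ = |m n| * μa s + ∑ k ∈ Finset.range (n - 1),
          ((Nat.choose (n - 1) k : ℝ) * |κ (k + 1)| * |m (n - 1 - k)|) * μa s := by
          rw [add_mul, Finset.sum_mul]
      _ ≤ μa (n + s) + ∑ k ∈ Finset.range (n - 1),
          (Nat.choose (n - 1) k : ℝ) * cumBound (k + 1) * μa (n + s) := by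
          refine add_le_add ?_ (Finset.sum_le_sum h3)
          exact le_trans (mul_le_mul_of_nonneg_right (habs n) (hμan s)) e0
      _ = cumBound n * μa (n + s) := by
          rw [cumBound_eq, add_mul, Finset.sum_mul, one_mul]
end

private lemma moment_rec (m : ℕ → ℝ) (h0 : m 0 = 1) (h1 : m 1 = 0) (j : ℕ) :
    m (j + 1) = ∑ k ∈ Finset.Icc 1 j,
      (Nat.choose j k : ℝ) * cumulantOfMoments m (k + 1) * m (j - k) := by
  have hκ1 : cumulantOfMoments m 1 = 0 := by
    rw [cumulantOfMoments_eq]; simpa using h1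
  have e := cumulantOfMoments_eq m (j + 1)
  simp only [Nat.add_sub_cancel] at e
  have e2 : m (j + 1) = ∑ k ∈ Finset.range (j + 1),
      (Nat.choose j k : ℝ) * cumulantOfMoments m (k + 1) * m (j - k) := by
    rw [Finset.sum_range_succ, Nat.choose_self, Nat.sub_self, h0]
    simp only [Nat.cast_one, one_mul, mul_one]
    linarith [e]
  rw [e2, Finset.sum_range_succ']
  simp only [hκ1, Nat.choose_zero_right, Nat.cast_one, one_mul, mul_zero, zero_mul, add_zero]
  rw [show Finset.Icc 1 j = Finset.Ico 1 (j + 1) by rw [Finset.Ico_add_one_right_eq_Icc],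
    Finset.sum_Ico_eq_sum_range]
  simp only [Nat.add_sub_cancel]
  exact (Finset.sum_congr rfl fun i _ => by rw [show 1 + i = i + 1 by omega]).symm

private lemma bracket_id (m : ℕ → ℝ) (h0 : m 0 = 1) (h1 : m 1 = 0) (d : ℕ → ℝ) (ℓ : ℕ) :
    ∑ j ∈ Finset.range (ℓ + 1), d j / (j.factorial : ℝ) * m (j + 1)
      = ∑ k ∈ Finset.Icc 1 ℓ, cumulantOfMoments m (k + 1) / (k.factorial : ℝ)
          * ∑ i ∈ Finset.range (ℓ - k + 1), d (k + i) / (i.factorial : ℝ) * m i := by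
  have hre : ∀ k ∈ Finset.Icc 1 ℓ,
      cumulantOfMoments m (k + 1) / (k.factorial : ℝ)
          * ∑ i ∈ Finset.range (ℓ - k + 1), d (k + i) / (i.factorial : ℝ) * m i
        = ∑ j ∈ Finset.Icc k ℓ, cumulantOfMoments m (k + 1) / (k.factorial : ℝ)
            * (d j / ((j - k).factorial : ℝ) * m (j - k)) := by
    intro k hk
    have hk' := Finset.mem_Icc.1 hk
    rw [Finset.mul_sum,
      show Finset.Icc k ℓ = Finset.Ico k (ℓ + 1) by rw [Finset.Ico_add_one_right_eq_Icc],
      Finset.sum_Ico_eq_sum_range, show ℓ + 1 - k = ℓ - k + 1 by omega]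
    refine Finset.sum_congr rfl fun i _ => ?_
    rw [show k + i - k = i by omega]
  rw [Finset.sum_congr rfl hre]
  rw [Finset.sum_comm' (s := Finset.Icc 1 ℓ) (t := fun k => Finset.Icc k ℓ)
    (t' := Finset.Icc 1 ℓ) (s' := fun j => Finset.Icc 1 j)
    (by intro k j; simp only [Finset.mem_Icc]; omega)]
  have hper : ∀ j ∈ Finset.Icc 1 ℓ,
      (∑ k ∈ Finset.Icc 1 j, cumulantOfMoments m (k + 1) / (k.factorial : ℝ)
          * (d j / ((j - k).factorial : ℝ) * m (j - k)))
        = d j / (j.factorial : ℝ) * m (j + 1) := by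
    intro j hj
    rw [moment_rec m h0 h1 j, Finset.mul_sum]
    refine Finset.sum_congr rfl fun k hk => ?_
    have hk' := Finset.mem_Icc.1 hk
    rw [Nat.cast_choose ℝ hk'.2]
    have f1 : ((k.factorial : ℝ)) ≠ 0 := Nat.cast_ne_zero.2 (Nat.factorial_ne_zero _)
    have f2 : (((j - k).factorial : ℝ)) ≠ 0 := Nat.cast_ne_zero.2 (Nat.factorial_ne_zero _)
    have f3 : ((j.factorial : ℝ)) ≠ 0 := Nat.cast_ne_zero.2 (Nat.factorial_ne_zero _)
    field_simp
  rw [Finset.sum_congr rfl hper]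
  rw [Finset.sum_range_succ']
  simp only [h1, Nat.factorial_zero, Nat.cast_one, div_one, mul_zero, add_zero]
  rw [show Finset.Icc 1 ℓ = Finset.Ico 1 (ℓ + 1) by rw [Finset.Ico_add_one_right_eq_Icc],
    Finset.sum_Ico_eq_sum_range]
  simp only [Nat.add_sub_cancel]
  exact Finset.sum_congr rfl fun i _ => by rw [show 1 + i = i + 1 by omega]

/-- Cumulant expansion lemma. -/
theorem stmt4 (ℓ : ℕ) :
    ∃ C : ℝ, ∀ (Ω : Type) [MeasurableSpace Ω] (μ : Measure Ω),
      IsProbabilityMeasure μ →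
      ∀ ξ : Ω → ℝ, Measurable ξ →
      (∀ k ≤ ℓ + 2, Integrable (fun ω => |ξ ω| ^ k) μ) →
      (∫ ω, ξ ω ∂μ) = 0 →
      ∀ f : ℝ → ℝ, ContDiff ℝ (↑(ℓ + 1) : ℕ∞) f →
      BddAbove (Set.range fun t => |iteratedDeriv (ℓ + 1) f t|) →
      |(∫ ω, ξ ω * f (ξ ω) ∂μ) -
          ∑ k ∈ Finset.Icc 1 ℓ,
            cumulantOfMoments (fun n => ∫ ω, ξ ω ^ n ∂μ) (k + 1) / (Nat.factorial k) *
              ∫ ω, iteratedDeriv k f (ξ ω) ∂μ| ≤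
        C * (∫ ω, |ξ ω| ^ (ℓ + 2) ∂μ) * ⨆ t : ℝ, |iteratedDeriv (ℓ + 1) f t| := by
  refine ⟨1 / (ℓ.factorial : ℝ) + ∑ k ∈ Finset.Icc 1 ℓ,
    cumBound (k + 1) / ((k.factorial : ℝ) * (((ℓ - k).factorial : ℝ))), ?_⟩
  intro Ω _ μ hprob ξ hmeas hint hcen f hf hbdd
  set M : ℝ := ⨆ t : ℝ, |iteratedDeriv (ℓ + 1) f t| with hMdef
  have hM : ∀ t, |iteratedDeriv (ℓ + 1) f t| ≤ M := fun t => le_ciSup hbdd t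
  have hM0 : 0 ≤ M := (abs_nonneg _).trans (hM 0)
  set m : ℕ → ℝ := fun j => ∫ ω, ξ ω ^ j ∂μ with hmdef
  set μa : ℕ → ℝ := fun j => ∫ ω, |ξ ω| ^ j ∂μ with hμadef
  have hμa0 : ∀ j, 0 ≤ μa j := fun j => integral_nonneg fun ω => by positivity
  have hm0 : m 0 = 1 := by simp [hmdef]
  have hm1 : m 1 = 0 := by simpa [hmdef] using hcen
  have hintp : ∀ j, j ≤ ℓ + 2 → Integrable (fun ω => ξ ω ^ j) μ := by
    intro j hj
    refine (hint j hj).mono' ((hmeas.pow_const j).aestronglyMeasurable)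
      (ae_of_all _ fun ω => ?_)
    rw [Real.norm_eq_abs, abs_pow]
  -- the error bound for each k ≤ ℓ
  have key : ∀ k, k ≤ ℓ →
      |(∫ ω, iteratedDeriv k f (ξ ω) ∂μ) -
          ∑ i ∈ Finset.range (ℓ - k + 1), iteratedDeriv (k + i) f 0 / (i.factorial : ℝ) * m i|
        ≤ M / (((ℓ - k).factorial : ℝ)) * μa (ℓ - k + 1) := by
    intro k hk
    set g : ℝ → ℝ := iteratedDeriv k f with hgdef
    have hg : ContDiff ℝ (((ℓ - k : ℕ) : ℕ∞) + 1) g := by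
      have := contDiff_itd (L := ℓ + 1) hf (k := k) (m := ℓ - k + 1) (by omega)
      exact_mod_cast this
    have hder : ∀ t, |iteratedDeriv (ℓ - k + 1) g t| ≤ M := by
      intro t
      rw [hgdef, itd_itd, show k + (ℓ - k + 1) = ℓ + 1 by omega]
      exact hM t
    set P : ℝ → ℝ := fun x =>
      ∑ i ∈ Finset.range (ℓ - k + 1), iteratedDeriv i g 0 / (i.factorial : ℝ) * x ^ i with hPdef
    have hρ : ∀ x, |g x - P x| ≤ M / (((ℓ - k).factorial : ℝ)) * |x| ^ (ℓ - k + 1) := by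
      intro x
      have := taylor_bound hg hder x
      calc |g x - P x| ≤ M * |x| ^ (ℓ - k + 1) / (((ℓ - k).factorial : ℝ)) := this
        _ = M / (((ℓ - k).factorial : ℝ)) * |x| ^ (ℓ - k + 1) := by ring
    have hPcont : Continuous P := by
      refine continuous_finset_sum _ fun i _ => ?_
      exact continuous_const.mul (continuous_pow i)
    have hPint : Integrable (fun ω => P (ξ ω)) μ := by
      rw [hPdef]
      exact integrable_finset_sum _ fun i hi =>
        (hintp i (by have := Finset.mem_range.1 hi; omega)).const_mul _
    have hρint : Integrable (fun ω => g (ξ ω) - P (ξ ω)) μ := by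
      refine ((hint (ℓ - k + 1) (by omega)).const_mul
        (M / (((ℓ - k).factorial : ℝ)))).mono'
        (((hg.continuous.sub hPcont).measurable.comp hmeas).aestronglyMeasurable)
        (ae_of_all _ fun ω => ?_)
      rw [Real.norm_eq_abs]
      exact hρ (ξ ω)
    have hsplit : (∫ ω, g (ξ ω) ∂μ)
        = (∫ ω, P (ξ ω) ∂μ) + ∫ ω, g (ξ ω) - P (ξ ω) ∂μ := by
      rw [← integral_add hPint hρint]
      refine integral_congr_ae (ae_of_all _ fun ω => ?_)
      ring
    have hPval : (∫ ω, P (ξ ω) ∂μ)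
        = ∑ i ∈ Finset.range (ℓ - k + 1), iteratedDeriv (k + i) f 0 / (i.factorial : ℝ) * m i := by
      rw [hPdef]
      rw [integral_finset_sum _ (fun i hi =>
        (hintp i (by have := Finset.mem_range.1 hi; omega)).const_mul _)]
      refine Finset.sum_congr rfl fun i hi => ?_
      rw [integral_const_mul, hgdef, itd_itd]
    rw [hsplit, hPval, add_sub_cancel_left]
    calc |∫ ω, g (ξ ω) - P (ξ ω) ∂μ| ≤ ∫ ω, |g (ξ ω) - P (ξ ω)| ∂μ := by
          rw [← Real.norm_eq_abs]
          exact (norm_integral_le_integral_norm _).trans (le_of_eq (by simp [Real.norm_eq_abs]))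
      _ ≤ ∫ ω, M / (((ℓ - k).factorial : ℝ)) * |ξ ω| ^ (ℓ - k + 1) ∂μ := by
          refine integral_mono hρint.abs
            ((hint (ℓ - k + 1) (by omega)).const_mul _) fun ω => hρ (ξ ω)
      _ = M / (((ℓ - k).factorial : ℝ)) * μa (ℓ - k + 1) := by
          rw [integral_const_mul]
  -- the error bound for the zeroth term
  have key0 :
      |(∫ ω, ξ ω * f (ξ ω) ∂μ) -
          ∑ j ∈ Finset.range (ℓ + 1), iteratedDeriv j f 0 / (j.factorial : ℝ) * m (j + 1)|
        ≤ M / (ℓ.factorial : ℝ) * μa (ℓ + 2) := by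
    have hg : ContDiff ℝ ((ℓ : ℕ∞) + 1) f := by exact_mod_cast hf
    have hder : ∀ t, |iteratedDeriv (ℓ + 1) f t| ≤ M := hM
    set P : ℝ → ℝ := fun x =>
      ∑ i ∈ Finset.range (ℓ + 1), iteratedDeriv i f 0 / (i.factorial : ℝ) * x ^ i with hPdef
    have hρ : ∀ x, |x * (f x - P x)| ≤ M / (ℓ.factorial : ℝ) * |x| ^ (ℓ + 2) := by
      intro x
      have h1 := taylor_bound hg hder x
      calc |x * (f x - P x)| = |x| * |f x - P x| := abs_mul _ _
        _ ≤ |x| * (M * |x| ^ (ℓ + 1) / (ℓ.factorial : ℝ)) :=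
            mul_le_mul_of_nonneg_left h1 (abs_nonneg _)
        _ = M / (ℓ.factorial : ℝ) * (|x| * |x| ^ (ℓ + 1)) := by ring
        _ = M / (ℓ.factorial : ℝ) * |x| ^ (ℓ + 2) := by rw [← pow_succ']
    have hPcont : Continuous P := by
      refine continuous_finset_sum _ fun i _ => ?_
      exact continuous_const.mul (continuous_pow i)
    have hPint : Integrable (fun ω => ξ ω * P (ξ ω)) μ := by
      have : (fun ω => ξ ω * P (ξ ω)) = fun ω =>
          ∑ i ∈ Finset.range (ℓ + 1), iteratedDeriv i f 0 / (i.factorial : ℝ) * ξ ω ^ (i + 1) := by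
        funext ω
        rw [hPdef, Finset.mul_sum]
        exact Finset.sum_congr rfl fun i _ => by rw [pow_succ]; ring
      rw [this]
      exact integrable_finset_sum _ fun i hi =>
        (hintp (i + 1) (by have := Finset.mem_range.1 hi; omega)).const_mul _
    have hρint : Integrable (fun ω => ξ ω * (f (ξ ω) - P (ξ ω))) μ := by
      refine ((hint (ℓ + 2) (by omega)).const_mul (M / (ℓ.factorial : ℝ))).mono'
        (((continuous_id.mul (hg.continuous.sub hPcont)).measurable.comp
          hmeas).aestronglyMeasurable)
        (ae_of_all _ fun ω => ?_)
      rw [Real.norm_eq_abs]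
      exact hρ (ξ ω)
    have hsplit : (∫ ω, ξ ω * f (ξ ω) ∂μ)
        = (∫ ω, ξ ω * P (ξ ω) ∂μ) + ∫ ω, ξ ω * (f (ξ ω) - P (ξ ω)) ∂μ := by
      rw [← integral_add hPint hρint]
      refine integral_congr_ae (ae_of_all _ fun ω => ?_)
      ring
    have hPval : (∫ ω, ξ ω * P (ξ ω) ∂μ)
        = ∑ j ∈ Finset.range (ℓ + 1), iteratedDeriv j f 0 / (j.factorial : ℝ) * m (j + 1) := by
      have h2 : (fun ω => ξ ω * P (ξ ω)) = fun ω =>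
          ∑ i ∈ Finset.range (ℓ + 1), iteratedDeriv i f 0 / (i.factorial : ℝ) * ξ ω ^ (i + 1) := by
        funext ω
        rw [hPdef, Finset.mul_sum]
        exact Finset.sum_congr rfl fun i _ => by rw [pow_succ]; ring
      rw [h2]
      rw [integral_finset_sum _ (fun i hi =>
        (hintp (i + 1) (by have := Finset.mem_range.1 hi; omega)).const_mul _)]
      exact Finset.sum_congr rfl fun i hi => by rw [integral_const_mul]
    rw [hsplit, hPval, add_sub_cancel_left]
    calc |∫ ω, ξ ω * (f (ξ ω) - P (ξ ω)) ∂μ|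
          ≤ ∫ ω, |ξ ω * (f (ξ ω) - P (ξ ω))| ∂μ := by
          rw [← Real.norm_eq_abs]
          exact (norm_integral_le_integral_norm _).trans
            (le_of_eq (by simp only [Real.norm_eq_abs]))
      _ ≤ ∫ ω, M / (ℓ.factorial : ℝ) * |ξ ω| ^ (ℓ + 2) ∂μ := by
          refine integral_mono hρint.abs
            ((hint (ℓ + 2) (by omega)).const_mul _) fun ω => hρ (ξ ω)
      _ = M / (ℓ.factorial : ℝ) * μa (ℓ + 2) := by rw [integral_const_mul]
  -- assemble
  set κ : ℕ → ℝ := cumulantOfMoments m with hκdef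
  set A : ℝ := ∫ ω, ξ ω * f (ξ ω) ∂μ with hAdef
  set G : ℕ → ℝ := fun k => ∫ ω, iteratedDeriv k f (ξ ω) ∂μ with hGdef
  set Pv : ℕ → ℝ := fun k =>
    ∑ i ∈ Finset.range (ℓ - k + 1), iteratedDeriv (k + i) f 0 / (i.factorial : ℝ) * m i
    with hPvdef
  set S : ℝ := ∑ j ∈ Finset.range (ℓ + 1), iteratedDeriv j f 0 / (j.factorial : ℝ) * m (j + 1)
    with hSdef
  have hbr : S = ∑ k ∈ Finset.Icc 1 ℓ, κ (k + 1) / (k.factorial : ℝ) * Pv k :=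
    bracket_id m hm0 hm1 (fun j => iteratedDeriv j f 0) ℓ
  have hmain : A - ∑ k ∈ Finset.Icc 1 ℓ, κ (k + 1) / (k.factorial : ℝ) * G k
      = (A - S) - ∑ k ∈ Finset.Icc 1 ℓ, κ (k + 1) / (k.factorial : ℝ) * (G k - Pv k) := by
    have h3 : ∑ k ∈ Finset.Icc 1 ℓ, κ (k + 1) / (k.factorial : ℝ) * (G k - Pv k)
        = (∑ k ∈ Finset.Icc 1 ℓ, κ (k + 1) / (k.factorial : ℝ) * G k) - S := by
      rw [hbr, ← Finset.sum_sub_distrib]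
      exact Finset.sum_congr rfl fun k _ => by ring
    rw [h3]
    ring
  have hterm : ∀ k ∈ Finset.Icc 1 ℓ,
      |κ (k + 1) / (k.factorial : ℝ) * (G k - Pv k)|
        ≤ cumBound (k + 1) / ((k.factorial : ℝ) * (((ℓ - k).factorial : ℝ))) * μa (ℓ + 2) * M := by
    intro k hk
    have hk' := Finset.mem_Icc.1 hk
    have hcb := cumBound_spec hmeas hint (k + 1) (by omega) (ℓ - k + 1)
      (by omega)
    rw [show k + 1 + (ℓ - k + 1) = ℓ + 2 by omega] at hcb
    have hGP := key k hk'.2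
    have f1 : (0:ℝ) < (k.factorial : ℝ) := by positivity
    have f2 : (0:ℝ) < (((ℓ - k).factorial : ℝ)) := by positivity
    calc |κ (k + 1) / (k.factorial : ℝ) * (G k - Pv k)|
        = |κ (k + 1)| / (k.factorial : ℝ) * |G k - Pv k| := by
          rw [abs_mul, abs_div, abs_of_pos f1]
      _ ≤ |κ (k + 1)| / (k.factorial : ℝ)
            * (M / (((ℓ - k).factorial : ℝ)) * μa (ℓ - k + 1)) := by
          exact mul_le_mul_of_nonneg_left hGP (by positivity)
      _ = (M / ((k.factorial : ℝ) * (((ℓ - k).factorial : ℝ))))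
            * (|κ (k + 1)| * μa (ℓ - k + 1)) := by ring
      _ ≤ (M / ((k.factorial : ℝ) * (((ℓ - k).factorial : ℝ))))
            * (cumBound (k + 1) * μa (ℓ + 2)) := by
          exact mul_le_mul_of_nonneg_left hcb (by positivity)
      _ = cumBound (k + 1) / ((k.factorial : ℝ) * (((ℓ - k).factorial : ℝ)))
            * μa (ℓ + 2) * M := by ring
  calc |A - ∑ k ∈ Finset.Icc 1 ℓ, κ (k + 1) / (k.factorial : ℝ) * G k|
      = |(A - S) - ∑ k ∈ Finset.Icc 1 ℓ, κ (k + 1) / (k.factorial : ℝ) * (G k - Pv k)| := by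
        rw [hmain]
    _ ≤ |A - S| + |∑ k ∈ Finset.Icc 1 ℓ, κ (k + 1) / (k.factorial : ℝ) * (G k - Pv k)| :=
        abs_sub _ _
    _ ≤ M / (ℓ.factorial : ℝ) * μa (ℓ + 2)
        + ∑ k ∈ Finset.Icc 1 ℓ,
            cumBound (k + 1) / ((k.factorial : ℝ) * (((ℓ - k).factorial : ℝ)))
              * μa (ℓ + 2) * M := by
        refine add_le_add key0 ?_
        exact (Finset.abs_sum_le_sum_abs _ _).trans (Finset.sum_le_sum hterm)
    _ = (1 / (ℓ.factorial : ℝ) + ∑ k ∈ Finset.Icc 1 ℓ,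
          cumBound (k + 1) / ((k.factorial : ℝ) * (((ℓ - k).factorial : ℝ))))
          * μa (ℓ + 2) * M := by
        rw [add_mul, add_mul, Finset.sum_mul, Finset.sum_mul]
        ring
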